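/- Let S = ∅ (full-dimensional box uncertainty). Then z(u) = Du + r with D_{[h],·} = 0 is an AAR solution of the uncertain LCP if and only if there is a set J ⊆ [n]∖[h] such that: D_J = -(M_J)^{-1}, D_{J,i} = 0 and D_{i,·} = 0 and r_i = 0 for all i ∉ J, r_J = -(M_J)^{-1} q̄_J, and moreover (a) M_J is invertible, (b) -(M_J)^{-1}(q̄_J + u_J) ≥ 0 for all u ∈ 𝒰, (c) -M_{N,J}(M_J)^{-1}(q̄_J + u_J) + q̄_N + u_N ≥ 0 for all u ∈ 𝒰, where N = [n]∖J. -/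

import Mathlib

open Matrix BigOperators
open scoped Classical

noncomputable section

/-- `u` lies in the box `[-ū, ū]`. -/
def inBox {n : ℕ} (ubar u : Fin n → ℝ) : Prop :=
  ∀ i, -ubar i ≤ u i ∧ u i ≤ ubar i

/-- `z` solves the LCP with matrix `M` and vector `q`. -/
def IsLCPSol {n : ℕ} (M : Matrix (Fin n) (Fin n) ℝ) (q z : Fin n → ℝ) : Prop :=
  (∀ i, 0 ≤ z i) ∧ (∀ i, 0 ≤ (M.mulVec z + q) i) ∧
    ∑ i, z i * (M.mulVec z + q) i = 0

/-- `z(u) = D u + r` is an affinely adjustable robust solution of the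
uncertain LCP with vector `q(u) = q̄ + u`. -/
def IsAAR {n : ℕ} (M : Matrix (Fin n) (Fin n) ℝ) (qbar ubar : Fin n → ℝ)
    (D : Matrix (Fin n) (Fin n) ℝ) (r : Fin n → ℝ) : Prop :=
  ∀ u, inBox ubar u → IsLCPSol M (qbar + u) (D.mulVec u + r)

/-- The principal submatrix of `M` indexed by the finset `J`. -/
def subM {n : ℕ} (M : Matrix (Fin n) (Fin n) ℝ) (J : Finset (Fin n)) :
    Matrix J J ℝ :=
  Matrix.of fun i j => M i.1 j.1

/-- The subvector of `q` indexed by `J`. -/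
def subV {n : ℕ} (q : Fin n → ℝ) (J : Finset (Fin n)) : J → ℝ :=
  fun i => q i.1

lemma dich1d (a b c d : ℝ)
    (h : ∀ t : ℝ, 0 ≤ t → t ≤ 1 → (a * t + b) * (c * t + d) = 0) :
    (a = 0 ∧ b = 0) ∨ (c = 0 ∧ d = 0) := by
  have e0 := h 0 le_rfl zero_le_one
  have e1 := h 1 zero_le_one le_rfl
  have eh := h (1/2) (by norm_num) (by norm_num)
  have hbd : b * d = 0 := by linear_combination e0
  have hac : a * c = 0 := by linear_combination 2*e1 - 4*eh + 2*e0
  have hadbc : a * d + b * c = 0 := by linear_combination -e1 + 4*eh - 3*e0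
  by_cases ha : a = 0
  · by_cases hb : b = 0
    · exact Or.inl ⟨ha, hb⟩
    · right
      subst ha
      have hd : d = 0 := (mul_eq_zero.mp hbd).resolve_left hb
      have hc : c = 0 := by
        have hbc : b * c = 0 := by linear_combination hadbc
        exact (mul_eq_zero.mp hbc).resolve_left hb
      exact ⟨hc, hd⟩
  · right
    have hc : c = 0 := (mul_eq_zero.mp hac).resolve_left ha
    have hd : d = 0 := by
      have had : a * d = 0 := by linear_combination hadbc - b * hc
      exact (mul_eq_zero.mp had).resolve_left ha
    exact ⟨hc, hd⟩

lemma affine_zero_of_box {n : ℕ} (ubar : Fin n → ℝ) (hubar : ∀ i, 0 < ubar i)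
    (a : Fin n → ℝ) (s : ℝ)
    (h : ∀ u, inBox ubar u → a ⬝ᵥ u + s = 0) : (∀ j, a j = 0) ∧ s = 0 := by
  have h0 : inBox ubar 0 := by
    intro i
    simp only [Pi.zero_apply]
    constructor <;> linarith [hubar i]
  have hs : s = 0 := by have := h 0 h0; simpa using this
  refine ⟨fun j => ?_, hs⟩
  have hsj : inBox ubar (Pi.single j (ubar j)) := by
    intro i
    by_cases hij : i = j
    · subst hij
      rw [Pi.single_eq_same]
      constructor <;> linarith [hubar i]
    · rw [Pi.single_eq_of_ne hij]
      constructor <;> linarith [hubar i]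
  have hval := h _ hsj
  rw [hs, add_zero, dotProduct_single] at hval
  exact (mul_eq_zero.mp hval).resolve_right (ne_of_gt (hubar j))

lemma dich_box {n : ℕ} (ubar : Fin n → ℝ)
    (a b : Fin n → ℝ) (s t : ℝ)
    (h : ∀ u, inBox ubar u → (a ⬝ᵥ u + s) * (b ⬝ᵥ u + t) = 0) :
    (∀ u, inBox ubar u → a ⬝ᵥ u + s = 0) ∨ (∀ u, inBox ubar u → b ⬝ᵥ u + t = 0) := by
  by_contra hcon
  push_neg at hcon
  obtain ⟨⟨u0, hu0, hf0⟩, ⟨u1, hu1, hg1⟩⟩ := hcon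
  set seg : ℝ → (Fin n → ℝ) := fun τ => fun i => u0 i + τ * (u1 i - u0 i) with hseg
  have hsegbox : ∀ τ : ℝ, 0 ≤ τ → τ ≤ 1 → inBox ubar (seg τ) := by
    intro τ h0 h1 i
    obtain ⟨l0, r0⟩ := hu0 i
    obtain ⟨l1, r1⟩ := hu1 i
    simp only [hseg]
    constructor
    · nlinarith
    · nlinarith
  have hdot : ∀ (c : Fin n → ℝ) (τ : ℝ),
      c ⬝ᵥ seg τ = c ⬝ᵥ u0 + τ * (c ⬝ᵥ u1 - c ⬝ᵥ u0) := by
    intro c τ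
    simp only [dotProduct, hseg]
    have hx : ∀ x : Fin n, x ∈ Finset.univ →
        c x * (u0 x + τ * (u1 x - u0 x))
          = c x * u0 x + (τ * (c x * u1 x) - τ * (c x * u0 x)) := fun x _ => by ring
    rw [Finset.sum_congr rfl hx, Finset.sum_add_distrib, Finset.sum_sub_distrib,
      ← Finset.mul_sum, ← Finset.mul_sum]
    ring
  have key : ∀ τ : ℝ, 0 ≤ τ → τ ≤ 1 →
      ((a ⬝ᵥ u1 - a ⬝ᵥ u0) * τ + (a ⬝ᵥ u0 + s)) *
      ((b ⬝ᵥ u1 - b ⬝ᵥ u0) * τ + (b ⬝ᵥ u0 + t)) = 0 := by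
    intro τ h0 h1
    have := h (seg τ) (hsegbox τ h0 h1)
    rw [hdot a τ, hdot b τ] at this
    linear_combination this
  rcases dich1d _ _ _ _ key with ⟨ha, hb⟩ | ⟨hc, hd⟩
  · exact hf0 hb
  · exact hg1 (by linarith)

lemma w_affine {n : ℕ} (M D : Matrix (Fin n) (Fin n) ℝ) (qbar r u : Fin n → ℝ) (i : Fin n) :
    (M.mulVec (D.mulVec u + r) + (qbar + u)) i
      = (fun j => (M * D) i j + if j = i then 1 else 0) ⬝ᵥ u + (M.mulVec r i + qbar i) := by
  simp only [Matrix.mulVec, dotProduct, Pi.add_apply, Matrix.mul_apply, add_mul, ite_mul,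
    one_mul, zero_mul, mul_add, Finset.sum_add_distrib, Finset.sum_ite_eq, Finset.mem_univ,
    if_true, Finset.sum_ite_eq']
  have hsw : ∑ x : Fin n, M i x * ∑ y : Fin n, D x y * u y
      = ∑ x : Fin n, (∑ j : Fin n, M i j * D j x) * u x := by
    simp_rw [Finset.mul_sum, Finset.sum_mul]
    rw [Finset.sum_comm]
    exact Finset.sum_congr rfl fun x _ => Finset.sum_congr rfl fun y _ => by ring
  rw [hsw]
  ring

lemma sum_restrict {n : ℕ} (J : Finset (Fin n)) (f : Fin n → ℝ)
    (hf : ∀ k, k ∉ J → f k = 0) : ∑ k : Fin n, f k = ∑ k : J, f k.1 := by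
  rw [Finset.sum_coe_sort J f]
  exact (Finset.sum_subset (Finset.subset_univ J) (fun x _ hx => hf x hx)).symm

lemma zval {n : ℕ} (M : Matrix (Fin n) (Fin n) ℝ) (qbar : Fin n → ℝ)
    (D : Matrix (Fin n) (Fin n) ℝ) (r : Fin n → ℝ) (J : Finset (Fin n))
    (hD1 : ∀ i j : J, D i.1 j.1 = -((subM M J)⁻¹ i j))
    (hD2 : ∀ (i : J) (j : Fin n), j ∉ J → D i.1 j = 0)
    (hrJ : ∀ i : J, r i.1 = -((subM M J)⁻¹.mulVec (subV qbar J)) i)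
    (u : Fin n → ℝ) (i : J) :
    (D.mulVec u + r) i.1
      = -((subM M J)⁻¹.mulVec (fun j : J => qbar j.1 + u j.1)) i := by
  have h1 : D.mulVec u i.1 = ∑ j : J, D i.1 j.1 * u j.1 := by
    rw [Matrix.mulVec, dotProduct]
    exact sum_restrict J (fun j => D i.1 j * u j)
      (fun k hk => by simp [hD2 i k hk])
  rw [Pi.add_apply, h1, hrJ i]
  simp only [Pi.neg_apply, Matrix.mulVec, dotProduct, subV]
  have e : ∑ j : J, D i.1 j.1 * u j.1 = -∑ j : J, (subM M J)⁻¹ i j * u j.1 := by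
    rw [← Finset.sum_neg_distrib]
    exact Finset.sum_congr rfl fun j _ => by rw [hD1 i j]; ring
  rw [e, ← neg_add, ← Finset.sum_add_distrib]
  congr 1
  exact Finset.sum_congr rfl fun j _ => by ring

/-- value of `w(u) = M z(u) + q̄ + u` when `z` vanishes off `J`. -/
lemma wval {n : ℕ} (M D : Matrix (Fin n) (Fin n) ℝ) (qbar r u : Fin n → ℝ)
    (J : Finset (Fin n)) (v : J → ℝ)
    (hz0 : ∀ k, k ∉ J → (D.mulVec u + r) k = 0)
    (hzJ : ∀ k : J, (D.mulVec u + r) k.1 = -((subM M J)⁻¹.mulVec v) k)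
    (i : Fin n) :
    (M.mulVec (D.mulVec u + r) + (qbar + u)) i
      = -(∑ k : J, M i k.1 * ((subM M J)⁻¹.mulVec v) k) + qbar i + u i := by
  have h1 : M.mulVec (D.mulVec u + r) i
      = ∑ k : J, M i k.1 * (D.mulVec u + r) k.1 := by
    rw [Matrix.mulVec, dotProduct]
    exact sum_restrict J (fun k => M i k * (D.mulVec u + r) k)
      (fun k hk => by simp [hz0 k hk])
  rw [Pi.add_apply, Pi.add_apply, h1]
  rw [Finset.sum_congr rfl fun k _ => by rw [hzJ k]]
  rw [← Finset.sum_neg_distrib]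
  rw [Finset.sum_congr rfl (fun k _ => (neg_mul_eq_mul_neg _ _).symm)]
  rw [Finset.sum_neg_distrib]
  ring

/-- full characterization of AAR solutions for
full-dimensional box uncertainty (`S = ∅`). -/
theorem stmt_7 (n h : ℕ) (M : Matrix (Fin n) (Fin n) ℝ) (qbar ubar : Fin n → ℝ)
    (hubar : ∀ i, 0 < ubar i)
    (D : Matrix (Fin n) (Fin n) ℝ) (r : Fin n → ℝ)
    (hDh : ∀ i : Fin n, (i : ℕ) < h → ∀ j, D i j = 0) :
    IsAAR M qbar ubar D r ↔
      ∃ J : Finset (Fin n),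
        (∀ i ∈ J, h ≤ (i : ℕ)) ∧
        -- D and r are given by the formulas
        (∀ i j : J, D i.1 j.1 = -((subM M J)⁻¹ i j)) ∧
        (∀ (i : J) (j : Fin n), j ∉ J → D i.1 j = 0) ∧
        (∀ i : Fin n, i ∉ J → ∀ j, D i j = 0) ∧
        (∀ i : Fin n, i ∉ J → r i = 0) ∧
        (∀ i : J, r i.1 = -((subM M J)⁻¹.mulVec (subV qbar J)) i) ∧
        -- (a) `M_J` is invertible
        IsUnit (subM M J).det ∧
        -- (b) `-(M_J)⁻¹ q_J(u) ≥ 0` for all `u ∈ 𝒰`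
        (∀ u, inBox ubar u → ∀ i : J,
          0 ≤ -((subM M J)⁻¹.mulVec (fun j : J => qbar j.1 + u j.1)) i) ∧
        -- (c) `-M_{N,J}(M_J)⁻¹ q_J(u) + q_N(u) ≥ 0` for all `u ∈ 𝒰`
        (∀ u, inBox ubar u → ∀ i : Fin n, i ∉ J →
          0 ≤ -(∑ j : J,
              M i j.1 * ((subM M J)⁻¹.mulVec (fun l : J => qbar l.1 + u l.1)) j)
            + qbar i + u i) := by
  constructor
  · -- forward direction
    intro hAAR
    set J : Finset (Fin n) :=
      Finset.univ.filter (fun i => ¬((∀ j, D i j = 0) ∧ r i = 0)) with hJdef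
    have hJmem : ∀ i : Fin n, i ∈ J ↔ ¬((∀ j, D i j = 0) ∧ r i = 0) := by
      intro i; simp [hJdef]
    have hPoff : ∀ i : Fin n, i ∉ J → (∀ j, D i j = 0) ∧ r i = 0 := by
      intro i hi
      by_contra hP
      exact hi ((hJmem i).mpr hP)
    -- per-index dichotomy
    have key : ∀ i : Fin n,
        ((∀ j, D i j = 0) ∧ r i = 0) ∨
        ((∀ j, (M * D) i j + (if j = i then 1 else 0) = 0)
          ∧ M.mulVec r i + qbar i = 0) := by
      intro i
      have hprod : ∀ u, inBox ubar u →
          ((fun j => D i j) ⬝ᵥ u + r i) *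
          ((fun j => (M * D) i j + if j = i then 1 else 0) ⬝ᵥ u
            + (M.mulVec r i + qbar i)) = 0 := by
        intro u hu
        obtain ⟨hz, hw, hsum⟩ := hAAR u hu
        have hterm : ∀ k ∈ Finset.univ, (D.mulVec u + r) k *
            (M.mulVec (D.mulVec u + r) + (qbar + u)) k = 0 := by
          rw [← Finset.sum_eq_zero_iff_of_nonneg
            (fun k _ => mul_nonneg (hz k) (hw k))]
          exact hsum
        have := hterm i (Finset.mem_univ i)
        rw [w_affine M D qbar r u i] at this
        have hzv : (D.mulVec u + r) i = (fun j => D i j) ⬝ᵥ u + r i := rfl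
        rw [hzv] at this
        exact this
      rcases dich_box ubar _ _ _ _ hprod with h1 | h2
      · left
        exact affine_zero_of_box ubar hubar _ _ h1
      · right
        exact affine_zero_of_box ubar hubar _ _ h2
    have hE : ∀ i : J,
        (∀ j, (M * D) i.1 j + (if j = i.1 then 1 else 0) = 0)
          ∧ M.mulVec r i.1 + qbar i.1 = 0 := by
      intro i
      rcases key i.1 with hP | hE
      · exact absurd hP ((hJmem i.1).mp i.2)
      · exact hE
    have hD3 : ∀ i : Fin n, i ∉ J → ∀ j, D i j = 0 := fun i hi => (hPoff i hi).1
    have hr0 : ∀ i : Fin n, i ∉ J → r i = 0 := fun i hi => (hPoff i hi).2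
    set A : Matrix J J ℝ := subM M J with hAdef
    set B : Matrix J J ℝ := Matrix.of (fun k j : J => -D k.1 j.1) with hBdef
    have hMD : ∀ (i : J) (j : Fin n),
        (M * D) i.1 j = ∑ k : J, M i.1 k.1 * D k.1 j := by
      intro i j
      rw [Matrix.mul_apply]
      exact sum_restrict J (fun k => M i.1 k * D k j)
        (fun k hk => by simp [hD3 k hk j])
    have hAB : A * B = 1 := by
      ext i j
      rw [Matrix.mul_apply, Matrix.one_apply]
      have hs : ∑ k : J, A i k * B k j = -∑ k : J, M i.1 k.1 * D k.1 j.1 := by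
        rw [← Finset.sum_neg_distrib]
        exact Finset.sum_congr rfl fun k _ => by
          simp only [hAdef, hBdef, subM, Matrix.of_apply]; ring
      rw [hs, ← hMD i j.1]
      have hEij := (hE i).1 j.1
      by_cases hij : i = j
      · subst hij
        rw [if_pos rfl] at hEij ⊢
        linarith
      · have hji : ¬(j.1 = i.1) := fun hv => hij (Subtype.ext hv.symm)
        rw [if_neg hji] at hEij
        rw [if_neg hij]
        linarith
    have hdet : IsUnit A.det := Matrix.isUnit_det_of_right_inverse hAB
    have hAinv : A⁻¹ = B := Matrix.inv_eq_right_inv hAB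
    have hBA : B * A = 1 := mul_eq_one_comm.mp hAB
    have hD1 : ∀ i j : J, D i.1 j.1 = -((subM M J)⁻¹ i j) := by
      intro i j
      rw [← hAdef, hAinv]
      simp [hBdef]
    have hD2 : ∀ (i : J) (j : Fin n), j ∉ J → D i.1 j = 0 := by
      intro i j hj
      have hcol : A.mulVec (fun k : J => D k.1 j) = 0 := by
        funext l
        have hEl := (hE l).1 j
        rw [if_neg (fun hv : j = l.1 => hj (hv ▸ l.2)), add_zero, hMD l j] at hEl
        rw [Matrix.mulVec, dotProduct]
        simpa [hAdef, subM] using hEl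
      have hzero : (fun k : J => D k.1 j) = 0 := by
        calc (fun k : J => D k.1 j)
            = Matrix.mulVec 1 (fun k : J => D k.1 j) := (Matrix.one_mulVec _).symm
          _ = (B * A).mulVec (fun k : J => D k.1 j) := by rw [hBA]
          _ = B.mulVec (A.mulVec (fun k : J => D k.1 j)) := by
              rw [← Matrix.mulVec_mulVec]
          _ = B.mulVec 0 := by rw [hcol]
          _ = 0 := Matrix.mulVec_zero B
      exact congrFun hzero i
    have hrJ : ∀ i : J, r i.1 = -((subM M J)⁻¹.mulVec (subV qbar J)) i := by
      have hAr : A.mulVec (subV r J) = -(subV qbar J) := by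
        funext i
        have hEi := (hE i).2
        have hres : M.mulVec r i.1 = ∑ k : J, M i.1 k.1 * r k.1 := by
          rw [Matrix.mulVec, dotProduct]
          exact sum_restrict J (fun k => M i.1 k * r k)
            (fun k hk => by simp [hr0 k hk])
        rw [hres] at hEi
        have : ∑ k : J, M i.1 k.1 * r k.1 = -qbar i.1 := by linarith
        rw [Matrix.mulVec, dotProduct]
        simpa [hAdef, subM, subV] using this
      intro i
      have : subV r J = -(B.mulVec (subV qbar J)) := by
        calc subV r J = Matrix.mulVec 1 (subV r J) := (Matrix.one_mulVec _).symm
          _ = (B * A).mulVec (subV r J) := by rw [hBA]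
          _ = B.mulVec (A.mulVec (subV r J)) := by rw [← Matrix.mulVec_mulVec]
          _ = B.mulVec (-(subV qbar J)) := by rw [hAr]
          _ = -(B.mulVec (subV qbar J)) := Matrix.mulVec_neg _ _
      have hi := congrFun this i
      rw [← hAdef, hAinv]
      simpa [subV] using hi
    refine ⟨J, ?_, hD1, hD2, hD3, hr0, hrJ, by rw [← hAdef]; exact hdet, ?_, ?_⟩
    · -- h ≤ i for i ∈ J
      intro i hi
      by_contra hlt
      push_neg at hlt
      have hrow : ∀ j, D i j = 0 := hDh i hlt
      have hBA_ii := congrFun (congrFun hBA ⟨i, hi⟩) ⟨i, hi⟩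
      rw [Matrix.mul_apply, Matrix.one_apply_eq] at hBA_ii
      have : ∑ k : J, B ⟨i, hi⟩ k * A k ⟨i, hi⟩ = 0 := by
        apply Finset.sum_eq_zero
        intro k _
        simp [hBdef, hrow k.1]
      rw [this] at hBA_ii
      exact one_ne_zero hBA_ii.symm
    · -- (b)
      intro u hu i
      have h0 := (hAAR u hu).1 i.1
      rwa [zval M qbar D r J hD1 hD2 hrJ u i] at h0
    · -- (c)
      intro u hu i hi
      have h0 := (hAAR u hu).2.1 i
      have hz0 : ∀ k, k ∉ J → (D.mulVec u + r) k = 0 := by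
        intro k hk
        simp [Matrix.mulVec, dotProduct, hD3 k hk, hr0 k hk]
      rw [wval M D qbar r u J (fun l : J => qbar l.1 + u l.1) hz0
        (fun k => zval M qbar D r J hD1 hD2 hrJ u k) i] at h0
      exact h0
  · -- reverse direction
    rintro ⟨J, hJh, hD1, hD2, hD3, hr0, hrJ, hdet, hb, hc⟩
    intro u hu
    set v : J → ℝ := fun j => qbar j.1 + u j.1 with hvdef
    have hz0 : ∀ k, k ∉ J → (D.mulVec u + r) k = 0 := by
      intro k hk
      simp [Matrix.mulVec, dotProduct, hD3 k hk, hr0 k hk]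
    have hzJ : ∀ k : J, (D.mulVec u + r) k.1 = -((subM M J)⁻¹.mulVec v) k :=
      fun k => zval M qbar D r J hD1 hD2 hrJ u k
    have hw : ∀ i : Fin n, (M.mulVec (D.mulVec u + r) + (qbar + u)) i
        = -(∑ k : J, M i k.1 * ((subM M J)⁻¹.mulVec v) k) + qbar i + u i :=
      wval M D qbar r u J v hz0 hzJ
    have hwJ : ∀ i : Fin n, i ∈ J → (M.mulVec (D.mulVec u + r) + (qbar + u)) i = 0 := by
      intro i hi
      rw [hw i]
      have hsum : ∑ k : J, M i k.1 * ((subM M J)⁻¹.mulVec v) k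
          = ((subM M J) * (subM M J)⁻¹).mulVec v ⟨i, hi⟩ := by
        rw [← Matrix.mulVec_mulVec, Matrix.mulVec, dotProduct]
        exact Finset.sum_congr rfl fun k _ => by simp [subM]
      rw [hsum, Matrix.mul_nonsing_inv _ hdet, Matrix.one_mulVec]
      simp [hvdef]
    refine ⟨?_, ?_, ?_⟩
    · -- z ≥ 0
      intro i
      by_cases hi : i ∈ J
      · rw [show i = (⟨i, hi⟩ : J).1 from rfl, hzJ ⟨i, hi⟩]
        exact hb u hu ⟨i, hi⟩
      · rw [hz0 i hi]
    · -- w ≥ 0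
      intro i
      by_cases hi : i ∈ J
      · rw [hwJ i hi]
      · rw [hw i]
        exact hc u hu i hi
    · -- complementarity
      apply Finset.sum_eq_zero
      intro i _
      by_cases hi : i ∈ J
      · rw [hwJ i hi, mul_zero]
      · rw [hz0 i hi, zero_mul]
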